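/- Let (Ā, B̄) be the structural pair composed of r similar subsystems parametrized by (Ā', B̄', H̄, Ē), and suppose the condensed graph D(Ē) is spanned by disjoint cycles, i.e., there exists a permutation σ of {1,…,r} with Ē_{σ(i),i} = 1 for all i. If the system bipartite graph B(Ā' ∨ H̄, B̄') has a matching with no right-unmatched vertices, then the system bipartite graph B(Ā, B̄) has a matching with no right-unmatched vertices. -/

import Mathlib

open Matrix

/-- Controllability matrix `[B, AB, …, A^{n-1}B]` (columns indexed by `Fin (card X) × U`). -/
def ctrbMatrix {X U : Type*} [Fintype X] [DecidableEq X]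
    (A : Matrix X X ℝ) (B : Matrix X U ℝ) :
    Matrix X (Fin (Fintype.card X) × U) ℝ :=
  fun i kj => (A ^ (kj.1 : ℕ) * B) i kj.2

/-- A real pair `(A,B)` is controllable if its controllability matrix has full rank. -/
def Controllable {X U : Type*} [Fintype X] [DecidableEq X] [Fintype U]
    (A : Matrix X X ℝ) (B : Matrix X U ℝ) : Prop :=
  (ctrbMatrix A B).rank = Fintype.card X

/-- `M` has the same sparsity pattern as the Boolean matrix `Mb`. -/
def SameSparsity {X Y : Type*} (M : Matrix X Y ℝ) (Mb : Matrix X Y Bool) : Prop :=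
  ∀ i j, M i j = 0 ↔ Mb i j = false

/-- Structural controllability of a structural (Boolean) pair. -/
def StructurallyControllable {X U : Type*} [Fintype X] [DecidableEq X] [Fintype U]
    (Ab : Matrix X X Bool) (Bb : Matrix X U Bool) : Prop :=
  ∃ A : Matrix X X ℝ, ∃ B : Matrix X U ℝ,
    SameSparsity A Ab ∧ SameSparsity B Bb ∧ Controllable A B

/-- Edge relation of the system digraph `D(Ā,B̄)`. -/
def sysDigraphRel {X U : Type*} (Ab : Matrix X X Bool) (Bb : Matrix X U Bool) :
    (X ⊕ U) → (X ⊕ U) → Prop :=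
  fun v w => match v, w with
  | Sum.inl j, Sum.inl i => Ab i j = true
  | Sum.inr k, Sum.inl i => Bb i k = true
  | _, Sum.inr _ => False

/-- A state vertex is input-reachable if some input vertex has a directed path to it. -/
def InputReachable {X U : Type*} (Ab : Matrix X X Bool) (Bb : Matrix X U Bool) (x : X) : Prop :=
  ∃ u : U, Relation.ReflTransGen (sysDigraphRel Ab Bb) (Sum.inr u) (Sum.inl x)

/-- Edge relation of the system bipartite graph `B(Ā,B̄)` (left = states ⊕ inputs, right = states). -/
def sysBipEdge {X U : Type*} (Ab : Matrix X X Bool) (Bb : Matrix X U Bool) :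
    (X ⊕ U) → X → Prop :=
  fun v i => match v with
  | Sum.inl j => Ab i j = true
  | Sum.inr k => Bb i k = true

/-- Edge relation of the state bipartite graph `B(Ā)`. -/
def stateBipEdge {X : Type*} (Ab : Matrix X X Bool) : X → X → Prop :=
  fun j i => Ab i j = true

/-- A matching of a bipartite graph with edge relation `E`: a set of edges sharing no
left vertex and no right vertex. -/
def IsMatching {α β : Type*} (E : α → β → Prop) (M : Set (α × β)) : Prop :=
  (∀ e ∈ M, E e.1 e.2) ∧
  (∀ e ∈ M, ∀ f ∈ M, e.1 = f.1 → e = f) ∧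
  (∀ e ∈ M, ∀ f ∈ M, e.2 = f.2 → e = f)

/-- Right vertices belonging to no edge of `M`. -/
def rightUnmatched {α β : Type*} (M : Set (α × β)) : Set β :=
  {b | ∀ e ∈ M, e.2 ≠ b}

/-- Left vertices belonging to no edge of `M`. -/
def leftUnmatched {α β : Type*} (M : Set (α × β)) : Set α :=
  {a | ∀ e ∈ M, e.1 ≠ a}

/-- A maximum matching: a matching of the largest cardinality. -/
def IsMaxMatching {α β : Type*} (E : α → β → Prop) (M : Set (α × β)) : Prop :=
  IsMatching E M ∧ ∀ M' : Set (α × β), IsMatching E M' → M'.ncard ≤ M.ncard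

/-- `S` is a strongly connected component of the digraph with edge relation `R`. -/
def IsSCC {V : Type*} (R : V → V → Prop) (S : Set V) : Prop :=
  S.Nonempty ∧ (∀ u ∈ S, ∀ v ∈ S, Relation.ReflTransGen R u v) ∧
  ∀ w : V, (∀ u ∈ S, Relation.ReflTransGen R u w ∧ Relation.ReflTransGen R w u) → w ∈ S

/-- An SCC is non-top linked if it has no incoming edge from outside. -/
def NonTopLinked {V : Type*} (R : V → V → Prop) (S : Set V) : Prop :=
  ∀ u v : V, R u v → v ∈ S → u ∈ S

/-- Dynamics pattern `(I_r ⊗ Ā') ∨ (Ē ⊗ H̄)` of a system of `r` similar subsystems. -/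
def simA {n : ℕ} (r : ℕ) (A' H : Matrix (Fin n) (Fin n) Bool)
    (E : Matrix (Fin r) (Fin r) Bool) :
    Matrix (Fin r × Fin n) (Fin r × Fin n) Bool :=
  fun q q' => ((if q.1 = q'.1 then A' q.2 q'.2 else false) || (E q.1 q'.1 && H q.2 q'.2))

/-- Input pattern `I_r ⊗ B̄'` of a system of `r` similar subsystems. -/
def simB {n p : ℕ} (r : ℕ) (B' : Matrix (Fin n) (Fin p) Bool) :
    Matrix (Fin r × Fin n) (Fin r × Fin p) Bool :=
  fun q k => if q.1 = k.1 then B' q.2 k.2 else false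

/-- Entrywise OR of Boolean matrices. -/
def orMat {X Y : Type*} (M N : Matrix X Y Bool) : Matrix X Y Bool :=
  fun i j => M i j || N i j

/-- Dynamics pattern of an interconnected system: diagonal blocks `Ā_i`,
off-diagonal blocks `Ē_{i,j}`. -/
def interA {r : ℕ} {n : Fin r → ℕ}
    (A : ∀ i, Matrix (Fin (n i)) (Fin (n i)) Bool)
    (E : ∀ i j, Matrix (Fin (n i)) (Fin (n j)) Bool) :
    Matrix (Σ i, Fin (n i)) (Σ i, Fin (n i)) Bool :=
  fun q q' => if h : q'.1 = q.1 then A q.1 q.2 (h ▸ q'.2) else E q.1 q'.1 q.2 q'.2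

/-- Input pattern of an interconnected system: block diagonal with blocks `B̄_i`. -/
def interB {r : ℕ} {n p : Fin r → ℕ}
    (B : ∀ i, Matrix (Fin (n i)) (Fin (p i)) Bool) :
    Matrix (Σ i, Fin (n i)) (Σ i, Fin (p i)) Bool :=
  fun q k => if h : k.1 = q.1 then B q.1 q.2 (h ▸ k.2) else false

/-- for a system of `r` similar subsystems whose condensed graph is spanned
by disjoint cycles, if the system bipartite graph `B(Ā' ∨ H̄, B̄')` has a matching with no
right-unmatched vertices, then so does the overall system bipartite graph `B(Ā, B̄)`. -/
theorem similar_system_matching_of_cycle_spanned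
    {n p : ℕ} {r : ℕ}
    (A' H : Matrix (Fin n) (Fin n) Bool) (B' : Matrix (Fin n) (Fin p) Bool)
    (E : Matrix (Fin r) (Fin r) Bool) (hE : ∀ i, E i i = false)
    (hcyc : ∃ σ : Equiv.Perm (Fin r), ∀ i : Fin r, E (σ i) i = true)
    (hmatch : ∃ M : Set ((Fin n ⊕ Fin p) × Fin n),
      IsMatching (sysBipEdge (orMat A' H) B') M ∧ rightUnmatched M = ∅) :
    ∃ M : Set (((Fin r × Fin n) ⊕ (Fin r × Fin p)) × (Fin r × Fin n)),
      IsMatching (sysBipEdge (simA r A' H E) (simB r B')) M ∧ rightUnmatched M = ∅ := by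
  classical
  obtain ⟨σ, hσ⟩ := hcyc
  obtain ⟨M, ⟨hedge, hleft, hright⟩, hun⟩ := hmatch
  have hex : ∀ i : Fin n, ∃ e, e ∈ M ∧ e.2 = i := by
    intro i
    by_contra h
    push_neg at h
    have : i ∈ rightUnmatched M := fun e he => h e he
    rw [hun] at this; exact this
  choose e he h2 using hex
  have hfinj : ∀ i i' : Fin n, (e i).1 = (e i').1 → i = i' := by
    intro i i' hii
    have := hleft _ (he i) _ (he i') hii
    rw [← h2 i, ← h2 i', this]
  set g : Fin r × Fin n → ((Fin r × Fin n) ⊕ (Fin r × Fin p)) := fun x =>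
    Sum.elim (fun j => Sum.inl ((if A' x.2 j then x.1 else σ⁻¹ x.1), j))
             (fun k => Sum.inr (x.1, k)) ((e x.2).1) with hg
  -- g is injective
  have hginj : Function.Injective g := by
    intro x x' hxx
    rcases hj : (e x.2).1 with j | k <;> rcases hj' : (e x'.2).1 with j' | k' <;>
      simp only [hg, hj, hj', Sum.elim_inl, Sum.elim_inr, Sum.inl.injEq, Sum.inr.injEq,
        Prod.mk.injEq, reduceCtorEq] at hxx
    · obtain ⟨hq, hjj⟩ := hxx
      subst hjj
      have h22 : x.2 = x'.2 := hfinj _ _ (by rw [hj, hj'])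
      rw [h22] at hq
      by_cases hA : A' x'.2 j
      · simp only [hA, if_true] at hq
        exact Prod.ext hq h22
      · simp only [hA, if_false] at hq
        exact Prod.ext (σ⁻¹.injective hq) h22
    · obtain ⟨hq, hkk⟩ := hxx
      subst hkk
      have h22 : x.2 = x'.2 := hfinj _ _ (by rw [hj, hj'])
      exact Prod.ext hq h22
  refine ⟨Set.range (fun x => (g x, x)), ⟨?_, ?_, ?_⟩, ?_⟩
  · rintro _ ⟨x, rfl⟩
    have hed := hedge _ (he x.2)
    rw [h2 x.2] at hed
    rcases hj : (e x.2).1 with j | k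
    · rw [hj] at hed
      have horj : (A' x.2 j || H x.2 j) = true := hed
      simp only [hg, hj, Sum.elim_inl]
      by_cases hA : A' x.2 j
      · simp only [hA, if_true]
        show simA r A' H E x (x.1, j) = true
        simp [simA, hA]
      · simp only [hA, if_false]
        have hH : H x.2 j = true := by
          rcases Bool.or_eq_true_iff.mp horj with h | h
          · exact absurd h hA
          · exact h
        show simA r A' H E x (σ⁻¹ x.1, j) = true
        have hEq : E x.1 (σ⁻¹ x.1) = true := by
          have := hσ (σ⁻¹ x.1)
          simpa using this
        simp [simA, hEq, hH, Bool.false_eq_true, hA]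
        exact hEq
    · rw [hj] at hed
      simp only [hg, hj, Sum.elim_inr]
      show simB r B' x (x.1, k) = true
      simpa [simB, sysBipEdge] using hed
  · rintro _ ⟨x, rfl⟩ _ ⟨x', rfl⟩ h
    simp only at h
    have := hginj h
    subst this; rfl
  · rintro _ ⟨x, rfl⟩ _ ⟨x', rfl⟩ h
    simp only at h
    subst h; rfl
  · ext x
    simp only [rightUnmatched, Set.mem_setOf_eq, Set.mem_empty_iff_false, iff_false, not_forall]
    exact ⟨(g x, x), ⟨x, rfl⟩, fun h => h rfl⟩
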